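/- Let X, Y, Z be finite abelian groups (or more generally objects of a category of finite modules). Define F_{XZ}^Y = |{L ≤ Y : L ≅ Z and Y/L ≅ X}|. Then the Riedtmann-Peng formula holds: F_{XZ}^Y = (|Ext^1(X,Z)_Y| / |Hom(X,Z)|) · (|Aut(Y)| / (|Aut(X)| · |Aut(Z)|)), where Ext^1(X,Z)_Y ⊆ Ext^1(X,Z) is the subset of extension classes whose middle term is isomorphic to Y. -/

import Mathlib

open Function

/-- Short exact sequences `0 → Z → Y → X → 0` of abelian groups with fixed middle term `Y`. -/
def SES (X Y Z : Type) [AddCommGroup X] [AddCommGroup Y] [AddCommGroup Z] : Type :=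
  {p : (Z →+ Y) × (Y →+ X) // Function.Injective p.1 ∧ Function.Surjective p.2 ∧
    Set.range p.1 = {y : Y | p.2 y = 0}}

/-- Baer equivalence of extensions: an automorphism of the middle term intertwining
the two short exact sequences.  The quotient of `SES X Y Z` by this relation is the
set `Ext^1(X,Z)_Y` of extension classes with middle term isomorphic to `Y`. -/
def extRel (X Y Z : Type) [AddCommGroup X] [AddCommGroup Y] [AddCommGroup Z]
    (p q : SES X Y Z) : Prop :=
  ∃ φ : Y ≃+ Y, (φ.toAddMonoidHom.comp p.1.1 = q.1.1) ∧
    (q.1.2.comp φ.toAddMonoidHom = p.1.2)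

/-- The multiplicative group structure on `AddAut M` (composition). -/
instance AddAut.mulGroupPort (M : Type) [Add M] : Group (AddAut M) where
  mul g h := AddEquiv.trans h g
  one := AddEquiv.refl _
  inv := AddEquiv.symm
  mul_assoc _ _ _ := rfl
  one_mul _ := rfl
  mul_one _ := rfl
  inv_mul_cancel := AddEquiv.self_trans_symm

section
variable {X Y Z : Type} [AddCommGroup X] [AddCommGroup Y] [AddCommGroup Z]

lemma SES.pi_i (p : SES X Y Z) (z : Z) : p.1.2 (p.1.1 z) = 0 := by
  have h : p.1.1 z ∈ Set.range p.1.1 := Set.mem_range_self z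
  rw [p.2.2.2] at h; exact h

lemma SES.ker_eq (p : SES X Y Z) : p.1.2.ker = p.1.1.range := by
  ext y
  simp only [AddMonoidHom.mem_ker, AddMonoidHom.mem_range]
  constructor
  · intro h
    have : y ∈ Set.range p.1.1 := by rw [p.2.2.2]; exact h
    exact this
  · rintro ⟨z, rfl⟩; exact SES.pi_i p z

-- smul
noncomputable instance : SMul (AddAut Y) (SES X Y Z) :=
  ⟨fun φ p => ⟨(φ.toAddMonoidHom.comp p.1.1, p.1.2.comp φ.symm.toAddMonoidHom),
    φ.injective.comp p.2.1,
    p.2.2.1.comp φ.symm.surjective, by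
      ext y
      simp only [AddMonoidHom.coe_comp, comp_apply, Set.mem_setOf_eq]
      constructor
      · rintro ⟨z, rfl⟩
        simp only [AddEquiv.coe_toAddMonoidHom, Function.comp_apply, AddEquiv.symm_apply_apply]
        exact SES.pi_i p z
      · intro h
        have : φ.symm y ∈ Set.range p.1.1 := by rw [p.2.2.2]; exact h
        obtain ⟨z, hz⟩ := this
        exact ⟨z, by simp [hz]⟩⟩⟩

lemma SES.smul_def (φ : AddAut Y) (p : SES X Y Z) :
    (φ • p).1 = (φ.toAddMonoidHom.comp p.1.1, p.1.2.comp φ.symm.toAddMonoidHom) := rfl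

noncomputable instance : MulAction (AddAut Y) (SES X Y Z) where
  one_smul p := Subtype.ext (by
    rw [SES.smul_def]
    exact Prod.ext (by ext z; rfl) (by ext y; rfl))
  mul_smul φ ψ p := Subtype.ext (by
    rw [SES.smul_def, SES.smul_def, SES.smul_def]
    exact Prod.ext (by ext z; rfl) (by ext y; rfl))

end

section
variable {X Y Z : Type} [AddCommGroup X] [AddCommGroup Y] [AddCommGroup Z]

/-- The automorphism `1 + i ∘ h ∘ π` of `Y`. -/
def SES.stabFun (p : SES X Y Z) (h : X →+ Z) : AddAut Y where
  toFun y := y + p.1.1 (h (p.1.2 y))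
  invFun y := y - p.1.1 (h (p.1.2 y))
  left_inv y := by simp [map_add, SES.pi_i p]
  right_inv y := by simp [map_sub, SES.pi_i p]
  map_add' a b := by simp [map_add]; abel

lemma SES.stabFun_mem (p : SES X Y Z) (h : X →+ Z) :
    p.stabFun h ∈ MulAction.stabilizer (AddAut Y) p := by
  rw [MulAction.mem_stabilizer_iff]
  refine Subtype.ext ?_
  rw [SES.smul_def]
  refine Prod.ext ?_ ?_
  · ext z
    show p.1.1 z + p.1.1 (h (p.1.2 (p.1.1 z))) = p.1.1 z
    simp [SES.pi_i p]
  · ext y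
    show p.1.2 ((p.stabFun h).symm y) = p.1.2 y
    show p.1.2 (y - p.1.1 (h (p.1.2 y))) = p.1.2 y
    simp [map_sub, SES.pi_i p]

lemma SES.card_stabilizer (p : SES X Y Z) :
    Nat.card (MulAction.stabilizer (AddAut Y) p) = Nat.card (X →+ Z) := by
  refine (Nat.card_eq_of_bijective
    (fun h : X →+ Z => (⟨p.stabFun h, p.stabFun_mem h⟩ : MulAction.stabilizer (AddAut Y) p)) ⟨?_, ?_⟩).symm
  · intro h1 h2 hh
    have h3 : ∀ y, y + p.1.1 (h1 (p.1.2 y)) = y + p.1.1 (h2 (p.1.2 y)) := fun y =>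
      DFunLike.congr_fun (Subtype.ext_iff.mp hh) y
    ext x
    obtain ⟨y, rfl⟩ := p.2.2.1 x
    exact p.2.1 (by have := h3 y; simpa using this)
  · rintro ⟨φ, hφ⟩
    rw [MulAction.mem_stabilizer_iff] at hφ
    have hpair := congrArg Subtype.val hφ
    rw [SES.smul_def] at hpair
    have c1 : φ.toAddMonoidHom.comp p.1.1 = p.1.1 := congrArg Prod.fst hpair
    have c2 : p.1.2.comp φ.symm.toAddMonoidHom = p.1.2 := congrArg Prod.snd hpair
    have c1' : ∀ z, φ (p.1.1 z) = p.1.1 z := fun z => DFunLike.congr_fun c1 z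
    have c2' : ∀ y, p.1.2 (φ y) = p.1.2 y := by
      intro y
      have := DFunLike.congr_fun c2 (φ y)
      simpa using this.symm
    -- ψ = φ - id
    set ψ : Y →+ Y := φ.toAddMonoidHom - AddMonoidHom.id Y with hψ
    have hψapp : ∀ y, ψ y = φ y - y := fun y => rfl
    have hψmem : ∀ y, ψ y ∈ p.1.1.range := by
      intro y
      have : ψ y ∈ Set.range p.1.1 := by
        rw [p.2.2.2]
        show p.1.2 (ψ y) = 0
        rw [hψapp, map_sub, c2', sub_self]
      exact this
    set h'' : Y →+ Z :=
      (AddMonoidHom.ofInjective p.2.1).symm.toAddMonoidHom.comp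
        (ψ.codRestrict p.1.1.range hψmem) with hh''
    have key1 : ∀ y, p.1.1 (h'' y) = ψ y := by
      intro y
      exact AddMonoidHom.apply_ofInjective_symm p.2.1 _
    have key0 : ∀ y, p.1.2 y = 0 → h'' y = 0 := by
      intro y hy
      have : y ∈ Set.range p.1.1 := by rw [p.2.2.2]; exact hy
      obtain ⟨z, rfl⟩ := this
      have : ψ (p.1.1 z) = 0 := by rw [hψapp, c1', sub_self]
      apply p.2.1
      rw [key1, this, map_zero]
    set s : X → Y := surjInv p.2.2.1 with hs
    have hss : ∀ x, p.1.2 (s x) = x := fun x => surjInv_eq p.2.2.1 x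
    set h : X →+ Z := {
      toFun := fun x => h'' (s x)
      map_zero' := key0 _ (by rw [hss])
      map_add' := by
        intro a b
        have : h'' (s (a + b) - s a - s b) = 0 :=
          key0 _ (by simp [map_sub, hss])
        simp only [map_sub] at this
        rw [sub_sub] at this
        exact sub_eq_zero.mp this } with hhdef
    have hfact : ∀ y, h (p.1.2 y) = h'' y := by
      intro y
      have : h'' (s (p.1.2 y) - y) = 0 := key0 _ (by simp [map_sub, hss])
      simp only [map_sub] at this
      show h'' (s (p.1.2 y)) = h'' y
      exact sub_eq_zero.mp this
    refine ⟨h, ?_⟩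
    refine Subtype.ext ?_
    ext y
    show y + p.1.1 (h (p.1.2 y)) = φ y
    rw [hfact, key1, hψapp]
    abel

end

section
variable (X Y Z : Type) [AddCommGroup X] [AddCommGroup Y] [AddCommGroup Z]

/-- Subgroups of `Y` isomorphic to `Z` with quotient isomorphic to `X`. -/
def Good : Type := {L : AddSubgroup Y // Nonempty (L ≃+ Z) ∧ Nonempty ((Y ⧸ L) ≃+ X)}

variable {X Y Z}

/-- Project a SES to its image subgroup. -/
noncomputable def SES.proj (p : SES X Y Z) : Good X Y Z :=
  ⟨p.1.1.range,
    ⟨(AddMonoidHom.ofInjective p.2.1).symm⟩,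
    ⟨(QuotientAddGroup.quotientAddEquivOfEq (SES.ker_eq p).symm).trans
      (QuotientAddGroup.quotientKerEquivOfSurjective p.1.2 p.2.2.1)⟩⟩

lemma SES.proj_val (p : SES X Y Z) : (SES.proj p).1 = p.1.1.range := rfl

lemma SES.L_eq_ker {L : Good X Y Z} (p : SES X Y Z) (hp : SES.proj p = L) :
    L.1 = p.1.2.ker :=
  ((congrArg Subtype.val hp : p.1.1.range = L.1).symm.trans (SES.ker_eq p).symm)

/-- Forward map of the fiber equivalence. -/
noncomputable def fiberTo (L : Good X Y Z) (q : {p : SES X Y Z // SES.proj p = L}) :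
    (Z ≃+ L.1) × ((Y ⧸ L.1) ≃+ X) :=
  ((AddMonoidHom.ofInjective q.1.2.1).trans
      (AddEquiv.addSubgroupCongr (congrArg Subtype.val q.2 : q.1.1.1.range = L.1)),
    (QuotientAddGroup.quotientAddEquivOfEq (SES.L_eq_ker q.1 q.2)).trans
      (QuotientAddGroup.quotientKerEquivOfSurjective q.1.1.2 q.1.2.2.1))

lemma fiberTo_fst (L : Good X Y Z) (q : {p : SES X Y Z // SES.proj p = L}) (z : Z) :
    ((fiberTo L q).1 z : Y) = q.1.1.1 z := rfl

lemma fiberTo_snd (L : Good X Y Z) (q : {p : SES X Y Z // SES.proj p = L}) (y : Y) :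
    (fiberTo L q).2 (QuotientAddGroup.mk' L.1 y) = q.1.1.2 y := rfl

/-- Inverse map of the fiber equivalence. -/
noncomputable def fiberInv (L : Good X Y Z) (e : (Z ≃+ L.1) × ((Y ⧸ L.1) ≃+ X)) :
    {p : SES X Y Z // SES.proj p = L} :=
  ⟨⟨(L.1.subtype.comp e.1.toAddMonoidHom, e.2.toAddMonoidHom.comp (QuotientAddGroup.mk' L.1)),
      Subtype.val_injective.comp e.1.injective,
      e.2.surjective.comp (QuotientAddGroup.mk'_surjective L.1), by
        ext y
        simp only [AddMonoidHom.coe_comp, comp_apply, Set.mem_setOf_eq,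
          AddEquiv.coe_toAddMonoidHom, AddSubgroup.coe_subtype]
        rw [show (e.2 (QuotientAddGroup.mk' L.1 y) = 0 ↔ QuotientAddGroup.mk' L.1 y = 0) from
          ⟨fun h => e.2.injective (by simpa using h), fun h => by simp [h]⟩]
        rw [show ((QuotientAddGroup.mk' L.1 y = 0) ↔ y ∈ L.1) from QuotientAddGroup.eq_zero_iff y]
        constructor
        · rintro ⟨z, rfl⟩; exact (e.1 z).2
        · intro hy; exact ⟨e.1.symm ⟨y, hy⟩, by simp⟩⟩,
      by
        apply Subtype.ext
        apply SetLike.ext'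
        show (Set.range (Subtype.val ∘ ⇑e.1) : Set Y) = (L.1 : Set Y)
        ext y
        constructor
        · rintro ⟨z, rfl⟩; exact (e.1 z).2
        · intro hy; exact ⟨e.1.symm ⟨y, hy⟩, by simp⟩⟩

/-- The fiber of `SES.proj` over `L`. -/
noncomputable def fiberEquiv (L : Good X Y Z) :
    {p : SES X Y Z // SES.proj p = L} ≃ ((Z ≃+ L.1) × ((Y ⧸ L.1) ≃+ X)) where
  toFun := fiberTo L
  invFun := fiberInv L
  left_inv := by
    intro q
    apply Subtype.ext
    apply Subtype.ext
    apply Prod.ext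
    · ext z
      exact fiberTo_fst L q z
    · ext y
      exact fiberTo_snd L q y
  right_inv := by
    intro e
    have h1 : (fiberTo L (fiberInv L e)).1 = e.1 := by
      ext z
      rfl
    have h2 : (fiberTo L (fiberInv L e)).2 = e.2 := by
      ext yq
      obtain ⟨y, rfl⟩ := QuotientAddGroup.mk'_surjective L.1 yq
      exact fiberTo_snd L (fiberInv L e) y
    exact Prod.ext h1 h2

end

section
variable {X Y Z : Type} [AddCommGroup X] [AddCommGroup Y] [AddCommGroup Z]

lemma extRel_iff_exists (p q : SES X Y Z) :
    extRel X Y Z p q ↔ ∃ g : AddAut Y, g • p = q := by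
  constructor
  · rintro ⟨φ, h1, h2⟩
    refine ⟨φ, Subtype.ext ?_⟩
    rw [SES.smul_def]
    refine Prod.ext h1 ?_
    ext y
    have := DFunLike.congr_fun h2 (φ.symm y)
    simpa using this.symm
  · rintro ⟨g, rfl⟩
    refine ⟨g, rfl, ?_⟩
    ext y
    show p.1.2 (g.symm (g y)) = p.1.2 y
    simp

noncomputable def quotExtEquiv :
    Quot (extRel X Y Z) ≃ MulAction.orbitRel.Quotient (AddAut Y) (SES X Y Z) :=
  Quot.congrRight (fun p q => by
    rw [extRel_iff_exists,
      show ((MulAction.orbitRel (AddAut Y) (SES X Y Z)) p q) ↔ p ∈ MulAction.orbit (AddAut Y) q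
        from MulAction.orbitRel_apply, MulAction.mem_orbit_iff]
    constructor
    · rintro ⟨g, rfl⟩; exact ⟨g⁻¹, inv_smul_smul g p⟩
    · rintro ⟨g, rfl⟩; exact ⟨g⁻¹, inv_smul_smul g q⟩)

end

section
variable {X Y Z : Type} [AddCommGroup X] [AddCommGroup Y] [AddCommGroup Z]

/-- Transport `Z ≃+ L` to `AddAut Z` using a chosen isomorphism. -/
def autEquivLeft {W : Type} [AddCommGroup W] (eL : W ≃+ Z) : (Z ≃+ W) ≃ AddAut Z where
  toFun e := e.trans eL
  invFun a := AddEquiv.trans a eL.symm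
  left_inv e := by ext z; simp
  right_inv a := by ext z; simp

def autEquivRight {W : Type} [AddCommGroup W] (fL : W ≃+ X) : (W ≃+ X) ≃ AddAut X where
  toFun e := fL.symm.trans e
  invFun a := fL.trans a
  left_inv e := by ext x; simp
  right_inv a := by ext x; simp

noncomputable def sesEquivProd : SES X Y Z ≃ (Good X Y Z) × (AddAut Z × AddAut X) :=
  ((Equiv.sigmaFiberEquiv (SES.proj (X := X) (Y := Y) (Z := Z))).symm.trans
    ((Equiv.sigmaCongrRight (fun L => (fiberEquiv L).trans
      (Equiv.prodCongr (autEquivLeft ((Classical.choice L.2.1 : L.1 ≃+ Z)))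
        (autEquivRight ((Classical.choice L.2.2 : (Y ⧸ L.1) ≃+ X)))))).trans
      (Equiv.sigmaEquivProd _ _)))

lemma card_SES_eq : Nat.card (SES X Y Z)
    = Nat.card (Good X Y Z) * (Nat.card (AddAut Z) * Nat.card (AddAut X)) := by
  rw [Nat.card_congr (sesEquivProd (X := X) (Y := Y) (Z := Z)), Nat.card_prod, Nat.card_prod]

lemma card_orbit_mul [Fintype X] [Fintype Y] [Fintype Z] (p : SES X Y Z) :
    Nat.card (MulAction.orbit (AddAut Y) p) * Nat.card (X →+ Z) = Nat.card (AddAut Y) := by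
  rw [Nat.card_congr (MulAction.orbitEquivQuotientStabilizer (AddAut Y) p),
    ← SES.card_stabilizer p,
    (Subgroup.card_eq_card_quotient_mul_card_subgroup
      (MulAction.stabilizer (AddAut Y) p)).symm]

lemma card_SES_mul [Fintype X] [Fintype Y] [Fintype Z] :
    Nat.card (SES X Y Z) * Nat.card (X →+ Z)
      = Nat.card (Quot (extRel X Y Z)) * Nat.card (AddAut Y) := by
  classical
  haveI hfh : Finite ((Z →+ Y) × (Y →+ X)) := by
    haveI : Finite (Z →+ Y) := Finite.of_injective (fun f => (f : Z → Y)) DFunLike.coe_injective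
    haveI : Finite (Y →+ X) := Finite.of_injective (fun f => (f : Y → X)) DFunLike.coe_injective
    infer_instance
  haveI hfs : Finite (SES X Y Z) := Subtype.finite
  haveI : Finite (AddAut Y) :=
    Finite.of_injective (fun (e : AddAut Y) => (e : Y → Y)) DFunLike.coe_injective
  letI : Fintype (SES X Y Z) := Fintype.ofFinite _
  letI : Fintype (MulAction.orbitRel.Quotient (AddAut Y) (SES X Y Z)) := Fintype.ofFinite _
  rw [Nat.card_congr (quotExtEquiv (X := X) (Y := Y) (Z := Z))]
  set Ω := MulAction.orbitRel.Quotient (AddAut Y) (SES X Y Z)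
  have h1 : Nat.card (SES X Y Z) = ∑ ω : Ω, Nat.card (MulAction.orbit (AddAut Y) ω.out) := by
    rw [Nat.card_eq_fintype_card,
      Fintype.card_congr (MulAction.selfEquivSigmaOrbits (AddAut Y) (SES X Y Z)),
      Fintype.card_sigma]
    exact Finset.sum_congr rfl (fun ω _ => (Nat.card_eq_fintype_card).symm)
  rw [h1, Finset.sum_mul]
  rw [Finset.sum_congr rfl (fun (ω : Ω) _ => card_orbit_mul (ω.out))]
  rw [Finset.sum_const, Finset.card_univ, smul_eq_mul, Nat.card_eq_fintype_card,
    Nat.card_eq_fintype_card (α := Ω)]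

end

/-- The Riedtmann-Peng formula: the Hall number `F_{XZ}^Y`, counting subgroups
`L ≤ Y` with `L ≅ Z` and `Y/L ≅ X`, equals
`(|Ext^1(X,Z)_Y| / |Hom(X,Z)|) · (|Aut Y| / (|Aut X| · |Aut Z|))`. -/
theorem stmt8 (X Y Z : Type) [AddCommGroup X] [Fintype X] [AddCommGroup Y] [Fintype Y]
    [AddCommGroup Z] [Fintype Z] :
    (Nat.card {L : AddSubgroup Y //
        Nonempty (L ≃+ Z) ∧ Nonempty ((Y ⧸ L) ≃+ X)} : ℚ)
      = ((Nat.card (Quot (extRel X Y Z)) : ℚ) / (Nat.card (X →+ Z) : ℚ))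
        * ((Nat.card (AddAut Y) : ℚ) / ((Nat.card (AddAut X) : ℚ) * (Nat.card (AddAut Z) : ℚ))) := by
  classical
  haveI : Finite (X →+ Z) :=
    Finite.of_injective (fun f => (f : X → Z)) DFunLike.coe_injective
  haveI : Finite (AddAut X) :=
    Finite.of_injective (fun (e : AddAut X) => (e : X → X)) DFunLike.coe_injective
  haveI : Finite (AddAut Z) :=
    Finite.of_injective (fun (e : AddAut Z) => (e : Z → Z)) DFunLike.coe_injective
  haveI : Nonempty (X →+ Z) := ⟨0⟩
  have hHom : (Nat.card (X →+ Z) : ℚ) ≠ 0 := Nat.cast_ne_zero.mpr Nat.card_pos.ne'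
  have hAX : (Nat.card (AddAut X) : ℚ) ≠ 0 := Nat.cast_ne_zero.mpr Nat.card_pos.ne'
  have hAZ : (Nat.card (AddAut Z) : ℚ) ≠ 0 := Nat.cast_ne_zero.mpr Nat.card_pos.ne'
  have hgood : Nat.card {L : AddSubgroup Y //
      Nonempty (L ≃+ Z) ∧ Nonempty ((Y ⧸ L) ≃+ X)} = Nat.card (Good X Y Z) := rfl
  have h1 := card_SES_eq (X := X) (Y := Y) (Z := Z)
  have h2 := card_SES_mul (X := X) (Y := Y) (Z := Z)
  have h1' : (Nat.card (SES X Y Z) : ℚ)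
      = (Nat.card (Good X Y Z) : ℚ) * ((Nat.card (AddAut Z) : ℚ) * (Nat.card (AddAut X) : ℚ)) := by
    exact_mod_cast congrArg (Nat.cast (R := ℚ)) h1
  have h2' : (Nat.card (SES X Y Z) : ℚ) * (Nat.card (X →+ Z) : ℚ)
      = (Nat.card (Quot (extRel X Y Z)) : ℚ) * (Nat.card (AddAut Y) : ℚ) := by
    exact_mod_cast congrArg (Nat.cast (R := ℚ)) h2
  rw [hgood]
  field_simp
  linear_combination h2' - (Nat.card (X →+ Z) : ℚ) * h1'
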